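/- Let N ≥ 3 be an integer and define F : ℝ → ℝ by F(x) = |x|^{4/(N−2)} x. Then there exists a constant C = C(N) such that for all real numbers x, y, z with x ≠ 0: if N ≥ 6 then | F(x+y+z) − F(x+y) − F(x+z) + F(x) | ≤ C |x|^{(6−N)/(2(N−2))} |y|^{(N+2)/(2(N−2))} |z|, while if 3 ≤ N ≤ 5 then | F(x+y+z) − F(x+y) − F(x+z) + F(x) | ≤ C |y| |z| (|x| + |y| + |z|)^{(6−N)/(N−2)}. -/

import Mathlib

open Real Filter Set
open scoped NNReal

lemma aux_rpow_subadd {p : ℝ} (hp0 : 0 < p) (hp1 : p ≤ 1) {a b : ℝ} (ha : 0 ≤ a) (hb : 0 ≤ b) :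
    (a + b) ^ p ≤ a ^ p + b ^ p := by
  lift a to ℝ≥0 using ha
  lift b to ℝ≥0 using hb
  have h := NNReal.rpow_add_rpow_le a b hp0 hp1
  simp only [NNReal.rpow_one, div_one, one_div] at h
  have h2 := NNReal.rpow_le_rpow h hp0.le
  rw [← NNReal.rpow_mul, inv_mul_cancel₀ hp0.ne', NNReal.rpow_one] at h2
  exact_mod_cast h2

lemma aux_holder {p : ℝ} (hp0 : 0 < p) (hp1 : p ≤ 1) (a b : ℝ) :
    |(|a| ^ p - |b| ^ p)| ≤ |a - b| ^ p := by
  have key : ∀ u v : ℝ, |u| ^ p - |v| ^ p ≤ |u - v| ^ p := by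
    intro u v
    have h1 : |u| ≤ |v| + |u - v| := by
      have := abs_sub_abs_le_abs_sub u v; linarith
    have h2 : |u| ^ p ≤ (|v| + |u - v|) ^ p :=
      Real.rpow_le_rpow (abs_nonneg u) h1 hp0.le
    have h3 := aux_rpow_subadd hp0 hp1 (abs_nonneg v) (abs_nonneg (u - v))
    linarith
  rw [abs_sub_le_iff]
  refine ⟨key a b, ?_⟩
  have := key b a
  rwa [abs_sub_comm] at this

lemma aux_bernoulli_le {p : ℝ} (hp0 : 0 < p) (hp1 : p ≤ 1) {a b : ℝ} (hb : 0 < b) (hba : b ≤ a) :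
    a ^ p - b ^ p ≤ p * b ^ (p - 1) * (a - b) := by
  have hs : (-1 : ℝ) ≤ (a - b) / b := by
    have : (0:ℝ) ≤ (a - b)/b := div_nonneg (by linarith) hb.le
    linarith
  have h := rpow_one_add_le_one_add_mul_self hs hp0.le hp1
  have h1 : (1 + (a - b) / b) = a / b := by field_simp; ring
  rw [h1, Real.div_rpow (hb.le.trans hba) hb.le] at h
  have hbp : (0:ℝ) < b ^ p := Real.rpow_pos_of_pos hb p
  have hkey : b ^ (p - 1) = b ^ p / b := Real.rpow_sub_one hb.ne' p
  rw [hkey]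
  have h2 : a ^ p ≤ b ^ p * (1 + p * ((a - b)/b)) := by
    rw [div_le_iff₀ hbp] at h; linarith [h]
  have h3 : b ^ p * (1 + p * ((a - b)/b)) = b ^ p + p * (b ^ p / b) * (a - b) := by
    field_simp
  linarith [h2, h3.symm.le]

lemma aux_lip_le_one {p : ℝ} (hp0 : 0 < p) (hp1 : p ≤ 1) {m a b : ℝ} (hm : 0 < m)
    (hma : m ≤ a) (hmb : m ≤ b) :
    |a ^ p - b ^ p| ≤ p * m ^ (p - 1) * |a - b| := by
  have key : ∀ u v : ℝ, m ≤ u → m ≤ v → v ≤ u → u ^ p - v ^ p ≤ p * m ^ (p-1) * |u - v| := by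
    intro u v hu hv hvu
    have h1 := aux_bernoulli_le hp0 hp1 (hm.trans_le hv) hvu
    have h2 : v ^ (p - 1) ≤ m ^ (p - 1) :=
      Real.rpow_le_rpow_of_nonpos hm hv (by linarith)
    have h3 : |u - v| = u - v := abs_of_nonneg (by linarith)
    rw [h3]
    have h4 : p * v ^ (p-1) * (u - v) ≤ p * m ^ (p-1) * (u - v) := by
      apply mul_le_mul_of_nonneg_right _ (by linarith)
      exact mul_le_mul_of_nonneg_left h2 hp0.le
    linarith
  rcases le_total b a with h | h
  · rw [abs_of_nonneg (by linarith [Real.rpow_le_rpow (hm.le.trans hmb) h hp0.le] : (0:ℝ) ≤ a ^ p - b ^ p)]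
    exact key a b hma hmb h
  · rw [abs_of_nonpos (by linarith [Real.rpow_le_rpow (hm.le.trans hma) h hp0.le] : a ^ p - b ^ p ≤ 0),
      abs_sub_comm]
    have := key b a hmb hma h
    linarith

lemma aux_lip_ge_one {p : ℝ} (hp1 : 1 ≤ p) {M a b : ℝ} (ha : 0 ≤ a) (hb : 0 ≤ b)
    (haM : a ≤ M) (hbM : b ≤ M) :
    |a ^ p - b ^ p| ≤ p * M ^ (p - 1) * |a - b| := by
  have hp0 : (0:ℝ) < p := lt_of_lt_of_le one_pos hp1
  have key : ∀ u v : ℝ, 0 ≤ v → v ≤ u → u ≤ M → u ^ p - v ^ p ≤ p * M ^ (p-1) * (u - v) := by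
    intro u v hv hvu huM
    rcases eq_or_lt_of_le (hv.trans hvu) with h | hu
    · have hu0 : u = 0 := h.symm
      have hv0 : v = 0 := le_antisymm (hu0 ▸ hvu) hv
      rw [hu0, hv0]
      simp only [Real.zero_rpow hp0.ne', sub_zero, sub_self, mul_zero, le_refl]
    · have hs : (-1:ℝ) ≤ v / u - 1 := by
        have : (0:ℝ) ≤ v / u := div_nonneg hv hu.le
        linarith
      have h := one_add_mul_self_le_rpow_one_add hs hp1
      have h1 : (1 + (v / u - 1)) = v / u := by ring
      rw [h1, Real.div_rpow hv hu.le] at h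
      have hup : (0:ℝ) < u ^ p := Real.rpow_pos_of_pos hu p
      have h2 : u ^ p * (1 + p * (v/u - 1)) ≤ v ^ p := by
        have hm := mul_le_mul_of_nonneg_left h hup.le
        have he : u ^ p * (v ^ p / u ^ p) = v ^ p := by field_simp
        linarith [he ▸ hm]
      have hkey : u ^ (p - 1) = u ^ p / u := Real.rpow_sub_one hu.ne' p
      have h3 : u ^ p * (1 + p * (v/u - 1)) = u ^ p + p * (u ^ p / u) * (v - u) := by
        field_simp
      have h4 : u ^ p - v ^ p ≤ p * u ^ (p-1) * (u - v) := by
        rw [hkey]; nlinarith [h2, h3]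
      have h5 : u ^ (p-1) ≤ M ^ (p-1) :=
        Real.rpow_le_rpow hu.le huM (by linarith)
      have h6 : p * u ^ (p-1) * (u - v) ≤ p * M ^ (p-1) * (u-v) := by
        apply mul_le_mul_of_nonneg_right _ (by linarith)
        exact mul_le_mul_of_nonneg_left h5 hp0.le
      linarith
  rcases le_total b a with h | h
  · rw [abs_of_nonneg (by linarith [Real.rpow_le_rpow hb h hp0.le] : (0:ℝ) ≤ a ^ p - b ^ p),
      abs_of_nonneg (by linarith : (0:ℝ) ≤ a - b)]
    exact key a b hb h haM
  · rw [abs_of_nonpos (by linarith [Real.rpow_le_rpow ha h hp0.le] : a ^ p - b ^ p ≤ 0),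
      abs_of_nonpos (by linarith : a - b ≤ 0)]
    have := key b a ha h hbM
    linarith

lemma aux_hasDerivAt {p : ℝ} (hp : 0 < p) (t : ℝ) :
    HasDerivAt (fun x : ℝ => |x| ^ p * x) ((p + 1) * |t| ^ p) t := by
  rcases lt_trichotomy t 0 with ht | ht | ht
  · have hnt : (0:ℝ) < -t := by linarith
    have h1 : HasDerivAt (fun x : ℝ => (-x) ^ p) (p * (-t) ^ (p - 1) * (-1)) t := by
      have hb : HasDerivAt (fun x : ℝ => -x) (-1 : ℝ) t := (hasDerivAt_id t).neg
      have hr : HasDerivAt (fun y : ℝ => y ^ p) (p * (-t) ^ (p - 1)) (-t) :=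
        Real.hasDerivAt_rpow_const (Or.inl (by linarith))
      exact hr.comp t hb
    have h2 : HasDerivAt (fun x : ℝ => (-x) ^ p * x)
        ((p * (-t) ^ (p - 1) * (-1)) * t + (-t) ^ p * 1) t := h1.mul (hasDerivAt_id t)
    have e1 : (-t) ^ (p - 1) * (-t) = (-t) ^ p := by
      rw [← Real.rpow_add_one hnt.ne' (p - 1)]
      norm_num
    have heq : (p * (-t) ^ (p - 1) * (-1)) * t + (-t) ^ p * 1 = (p + 1) * |t| ^ p := by
      rw [abs_of_neg ht]
      linear_combination p * e1
    rw [heq] at h2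
    apply h2.congr_of_eventuallyEq
    filter_upwards [eventually_lt_nhds ht] with x hx
    rw [abs_of_neg hx]
  · subst ht
    rw [hasDerivAt_iff_tendsto_slope]
    have hval : (p + 1) * |(0:ℝ)| ^ p = 0 := by
      simp [Real.zero_rpow hp.ne']
    rw [hval]
    have hcont : ContinuousAt (fun x : ℝ => |x| ^ p) 0 := by
      have h1 : ContinuousAt (fun y : ℝ => y ^ p) (|(0:ℝ)|) :=
        Real.continuousAt_rpow_const _ _ (Or.inr hp.le)
      exact h1.comp continuous_abs.continuousAt
    have h2 : Tendsto (fun x : ℝ => |x| ^ p) (nhdsWithin 0 {(0:ℝ)}ᶜ) (nhds 0) := by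
      have h3 := hcont.tendsto
      rw [show |(0:ℝ)| ^ p = 0 by simp [Real.zero_rpow hp.ne']] at h3
      exact h3.mono_left nhdsWithin_le_nhds
    apply h2.congr'
    filter_upwards [self_mem_nhdsWithin] with x hx
    have hx0 : x ≠ 0 := by simpa using hx
    rw [slope_def_field]
    field_simp
    simp
  · have h1 : HasDerivAt (fun x : ℝ => x ^ p) (p * t ^ (p - 1)) t :=
      Real.hasDerivAt_rpow_const (Or.inl ht.ne')
    have h2 : HasDerivAt (fun x : ℝ => x ^ p * x)
        ((p * t ^ (p - 1)) * t + t ^ p * 1) t := h1.mul (hasDerivAt_id t)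
    have e1 : t ^ (p - 1) * t = t ^ p := by
      rw [← Real.rpow_add_one ht.ne' (p - 1)]
      norm_num
    have heq : (p * t ^ (p - 1)) * t + t ^ p * 1 = (p + 1) * |t| ^ p := by
      rw [abs_of_pos ht]
      linear_combination p * e1
    rw [heq] at h2
    apply h2.congr_of_eventuallyEq
    filter_upwards [eventually_gt_nhds ht] with x hx
    rw [abs_of_pos hx]

lemma aux_mvt (f f' : ℝ → ℝ) (hf : ∀ t, HasDerivAt f (f' t) t) (y : ℝ) :
    ∃ η : ℝ, |η| ≤ |y| ∧ f y - f 0 = f' η * y := by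
  rcases lt_trichotomy y 0 with hy | hy | hy
  · obtain ⟨c, hc, hceq⟩ := exists_hasDerivAt_eq_slope f f' hy
      (fun t _ => (hf t).continuousAt.continuousWithinAt) (fun t _ => hf t)
    refine ⟨c, ?_, ?_⟩
    · rw [abs_of_neg hc.2, abs_of_neg hy]; linarith [hc.1]
    · rw [eq_div_iff (by simp [sub_ne_zero]; linarith : (0:ℝ) - y ≠ 0)] at hceq
      have h2 : f' c * (0 - y) = -(f' c * y) := by ring
      linarith [hceq, h2]
  · exact ⟨0, by simp [hy], by simp [hy]⟩
  · obtain ⟨c, hc, hceq⟩ := exists_hasDerivAt_eq_slope f f' hy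
      (fun t _ => (hf t).continuousAt.continuousWithinAt) (fun t _ => hf t)
    refine ⟨c, ?_, ?_⟩
    · rw [abs_of_pos hc.1, abs_of_pos hy]; linarith [hc.2]
    · rw [eq_div_iff (by simp [sub_ne_zero]; linarith : y - (0:ℝ) ≠ 0)] at hceq
      have h2 : f' c * (y - 0) = f' c * y := by ring
      linarith [hceq, h2]

set_option maxHeartbeats 1600000 in
/-- Second-difference estimate for the energy-critical nonlinearity
`F(x) = |x|^{4/(N-2)} x`, in high and low dimensions. -/
theorem critical_nonlinearity_second_difference
    (N : ℕ) (hN : 3 ≤ N)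
    (F : ℝ → ℝ) (hF : ∀ x : ℝ, F x = |x| ^ ((4 : ℝ) / ((N : ℝ) - 2)) * x) :
    ∃ C : ℝ, 0 < C ∧ ∀ x y z : ℝ, x ≠ 0 →
      (6 ≤ N →
        |F (x + y + z) - F (x + y) - F (x + z) + F x|
          ≤ C * |x| ^ ((6 - (N : ℝ)) / (2 * ((N : ℝ) - 2))) *
              |y| ^ (((N : ℝ) + 2) / (2 * ((N : ℝ) - 2))) * |z|) ∧
      (N ≤ 5 →
        |F (x + y + z) - F (x + y) - F (x + z) + F x|
          ≤ C * |y| * |z| * (|x| + |y| + |z|) ^ ((6 - (N : ℝ)) / ((N : ℝ) - 2))) := by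
  have hN3 : (3:ℝ) ≤ (N:ℝ) := by exact_mod_cast hN
  have hN2 : (0:ℝ) < (N:ℝ) - 2 := by linarith
  set p : ℝ := 4 / ((N:ℝ) - 2) with hpdef
  have hp : 0 < p := by positivity
  have hderiv : ∀ t : ℝ, HasDerivAt F ((p + 1) * |t| ^ p) t := by
    intro t
    apply (aux_hasDerivAt hp t).congr_of_eventuallyEq
    exact Filter.Eventually.of_forall hF
  -- MVT in the "y"-slot
  have key : ∀ x y z : ℝ, ∃ η : ℝ, |η| ≤ |y| ∧
      F (x + y + z) - F (x + y) - F (x + z) + F x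
        = ((p + 1) * |x + z + η| ^ p - (p + 1) * |x + η| ^ p) * y := by
    intro x y z
    have hH' : ∀ t : ℝ, HasDerivAt (fun s => F (x + z + s) - F (x + s))
        ((p + 1) * |x + z + t| ^ p - (p + 1) * |x + t| ^ p) t := by
      intro t
      have h1 : HasDerivAt (fun s : ℝ => F (x + z + s)) ((p + 1) * |x + z + t| ^ p) t := by
        have hin : HasDerivAt (fun s : ℝ => x + z + s) 1 t := (hasDerivAt_id t).const_add (x + z)
        have := (hderiv (x + z + t)).comp t hin
        rw [mul_one] at this; exact this
      have h2 : HasDerivAt (fun s : ℝ => F (x + s)) ((p + 1) * |x + t| ^ p) t := by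
        have hin : HasDerivAt (fun s : ℝ => x + s) 1 t := (hasDerivAt_id t).const_add x
        have := (hderiv (x + t)).comp t hin
        rw [mul_one] at this; exact this
      exact h1.sub h2
    obtain ⟨η, hη, heq⟩ := aux_mvt _ _ hH' y
    refine ⟨η, hη, ?_⟩
    rw [show x + z + y = x + y + z by ring, add_zero, add_zero] at heq
    linarith [heq]
  -- the constant
  refine ⟨4 * (p + 1) + p * (p + 1) + 1, by positivity, ?_⟩
  set C : ℝ := 4 * (p + 1) + p * (p + 1) + 1 with hCdef
  have hC4 : 4 * (p + 1) ≤ C := by nlinarith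
  have hCp : p * (p + 1) ≤ C := by nlinarith
  intro x y z hx
  have hx' : 0 < |x| := abs_pos.mpr hx
  constructor
  · -- high dimensions : N ≥ 6
    intro hN6
    have hN6R : (6:ℝ) ≤ (N:ℝ) := by exact_mod_cast hN6
    have hp1 : p ≤ 1 := by rw [hpdef, div_le_one hN2]; linarith
    set q : ℝ := ((N : ℝ) + 2) / (2 * ((N : ℝ) - 2)) with hqdef
    have hq0 : 0 < q := by positivity
    have hq1 : q ≤ 1 := by rw [hqdef, div_le_one (by positivity)]; linarith
    have hpq : p ≤ q := by
      rw [hpdef, hqdef, div_le_div_iff₀ hN2 (by positivity)]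
      nlinarith
    have he : (6 - (N : ℝ)) / (2 * ((N : ℝ) - 2)) = p - q := by
      rw [hpdef, hqdef]; field_simp; ring
    rw [he]
    rcases eq_or_ne y 0 with rfl | hy0
    · have hzero : F (x + 0 + z) - F (x + 0) - F (x + z) + F x = 0 := by
        rw [show x + 0 + z = x + z by ring, add_zero]; ring
      rw [hzero, abs_zero]
      positivity
    have hy : 0 < |y| := abs_pos.mpr hy0
    rcases le_or_gt |y| (|x| / 2) with hcase | hcase
    · -- |y| ≤ |x|/2 : mean value in the y-slot
      obtain ⟨η, hη, hD⟩ := key x y z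
      set a : ℝ := x + z + η with hadef
      set b : ℝ := x + η with hbdef
      have hb2 : |x| / 2 ≤ |b| := by
        have h5 : |x| ≤ |b| + |η| := by
          calc |x| = |b + (-η)| := by rw [show b + (-η) = x by rw [hbdef]; ring]
          _ ≤ |b| + |(-η)| := abs_add_le _ _
          _ = |b| + |η| := by rw [abs_neg]
        linarith
      have habz : a - b = z := by rw [hadef, hbdef]; ring
      -- core estimate  | |a|^p - |b|^p | ≤ (|x|/4)^(p-1) * |z|
      have hcore : |(|a| ^ p - |b| ^ p)| ≤ (|x| / 4) ^ (p - 1) * |z| := by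
        rcases le_or_gt |z| (|x| / 4) with hz | hz
        · have ha4 : |x| / 4 ≤ |a| := by
            have h5 : |b| ≤ |a| + |z| := by
              calc |b| = |a + (-z)| := by rw [show a + (-z) = b by rw [← habz]; ring]
              _ ≤ |a| + |(-z)| := abs_add_le _ _
              _ = |a| + |z| := by rw [abs_neg]
            linarith
          have hb4 : |x| / 4 ≤ |b| := by linarith
          have h6 := aux_lip_le_one hp hp1 (by positivity : (0:ℝ) < |x| / 4) ha4 hb4
          have h7 : |(|a| - |b|)| ≤ |a - b| := abs_abs_sub_abs_le_abs_sub a b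
          calc |(|a| ^ p - |b| ^ p)| ≤ p * (|x|/4) ^ (p-1) * |(|a| - |b|)| := h6
          _ ≤ 1 * (|x|/4) ^ (p-1) * |a - b| := by
              apply mul_le_mul (by nlinarith [Real.rpow_pos_of_pos (by positivity : (0:ℝ) < |x|/4) (p-1)]) h7 (abs_nonneg _) (by positivity)
          _ = (|x|/4) ^ (p-1) * |z| := by rw [habz]; ring
        · have h6 := aux_holder hp hp1 a b
          rw [habz] at h6
          have hzpos : (0:ℝ) < |z| := lt_of_le_of_lt (by positivity) hz
          have h7 : |z| ^ p = |z| ^ (p - 1) * |z| := by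
            rw [← Real.rpow_add_one hzpos.ne' (p - 1)]
            norm_num
          have h8 : |z| ^ (p - 1) ≤ (|x| / 4) ^ (p - 1) :=
            Real.rpow_le_rpow_of_nonpos (by positivity) hz.le (by linarith)
          calc |(|a| ^ p - |b| ^ p)| ≤ |z| ^ p := h6
          _ = |z| ^ (p-1) * |z| := h7
          _ ≤ (|x|/4) ^ (p-1) * |z| := by
              apply mul_le_mul_of_nonneg_right h8 (abs_nonneg z)
      -- (|x|/4)^(p-1) ≤ 4 * |x|^(p-1)
      have h44 : (|x| / 4) ^ (p - 1) ≤ 4 * |x| ^ (p - 1) := by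
        rw [Real.div_rpow (abs_nonneg x) (by norm_num : (0:ℝ) ≤ 4)]
        rw [div_le_iff₀ (Real.rpow_pos_of_pos (by norm_num : (0:ℝ) < 4) _)]
        have e4 : (4:ℝ) ^ (p - 1) * 4 = 4 ^ p := by
          rw [← Real.rpow_add_one (by norm_num : (4:ℝ) ≠ 0) (p - 1)]
          norm_num
        have h14 : (1:ℝ) ≤ 4 ^ p := by
          have := Real.rpow_le_rpow_of_exponent_le (by norm_num : (1:ℝ) ≤ 4) hp.le
          rwa [Real.rpow_zero] at this
        nlinarith [Real.rpow_pos_of_pos hx' (p - 1)]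
      have hk2 : |x| ^ (p - 1) * |y| ≤ |x| ^ (p - q) * |y| ^ q := by
        have e5 : |x| ^ (p - 1) = |x| ^ (p - q) * |x| ^ (q - 1) := by
          rw [← Real.rpow_add hx']; ring_nf
        have e6 : |x| ^ (q - 1) ≤ |y| ^ (q - 1) :=
          Real.rpow_le_rpow_of_nonpos hy (by linarith) (by linarith)
        have e7 : |y| ^ (q - 1) * |y| = |y| ^ q := by
          rw [← Real.rpow_add_one hy.ne' (q - 1)]
          norm_num
        calc |x| ^ (p-1) * |y| = |x| ^ (p-q) * (|x| ^ (q-1) * |y|) := by rw [e5]; ring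
        _ ≤ |x| ^ (p-q) * (|y| ^ (q-1) * |y|) := by
            apply mul_le_mul_of_nonneg_left _ (by positivity)
            exact mul_le_mul_of_nonneg_right e6 (abs_nonneg y)
        _ = |x| ^ (p-q) * |y| ^ q := by rw [e7]
      calc |F (x + y + z) - F (x + y) - F (x + z) + F x|
          = ((p + 1) * |(|a| ^ p - |b| ^ p)|) * |y| := by
            rw [hD, abs_mul, show (p+1) * |a| ^ p - (p+1) * |b| ^ p = (p+1) * (|a| ^ p - |b| ^ p) by ring, abs_mul, abs_of_pos (by linarith : (0:ℝ) < p + 1)]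
      _ ≤ ((p + 1) * ((|x|/4) ^ (p-1) * |z|)) * |y| := by
            apply mul_le_mul_of_nonneg_right _ (abs_nonneg y)
            exact mul_le_mul_of_nonneg_left hcore (by linarith)
      _ ≤ ((p + 1) * ((4 * |x| ^ (p-1)) * |z|)) * |y| := by
            apply mul_le_mul_of_nonneg_right _ (abs_nonneg y)
            apply mul_le_mul_of_nonneg_left _ (by linarith)
            exact mul_le_mul_of_nonneg_right h44 (abs_nonneg z)
      _ = (4 * (p + 1)) * (|x| ^ (p-1) * |y|) * |z| := by ring
      _ ≤ (4 * (p + 1)) * (|x| ^ (p-q) * |y| ^ q) * |z| := by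
            apply mul_le_mul_of_nonneg_right _ (abs_nonneg z)
            exact mul_le_mul_of_nonneg_left hk2 (by positivity)
      _ ≤ C * (|x| ^ (p-q) * |y| ^ q) * |z| := by
            apply mul_le_mul_of_nonneg_right _ (abs_nonneg z)
            exact mul_le_mul_of_nonneg_right hC4 (by positivity)
      _ = C * |x| ^ (p-q) * |y| ^ q * |z| := by ring
    · -- |x|/2 < |y| : mean value in the z-slot
      obtain ⟨ξ, hξ, hD⟩ := key x z y
      have hDD : F (x + y + z) - F (x + y) - F (x + z) + F x
          = ((p + 1) * |x + y + ξ| ^ p - (p + 1) * |x + ξ| ^ p) * z := by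
        rw [show x + y + z = x + z + y by ring]
        linarith [hD]
      have hcore : |(|x + y + ξ| ^ p - |x + ξ| ^ p)| ≤ |y| ^ p := by
        have h6 := aux_holder hp hp1 (x + y + ξ) (x + ξ)
        rwa [show x + y + ξ - (x + ξ) = y by ring] at h6
      have hyp : |y| ^ p ≤ 2 * (|x| ^ (p - q) * |y| ^ q) := by
        have e5 : |y| ^ p = |y| ^ (p - q) * |y| ^ q := by
          rw [← Real.rpow_add hy]; ring_nf
        have e6 : |y| ^ (p - q) ≤ (|x|/2) ^ (p - q) :=
          Real.rpow_le_rpow_of_nonpos (by positivity) (by linarith) (by linarith)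
        have e7 : (|x|/2) ^ (p - q) ≤ 2 * |x| ^ (p - q) := by
          rw [Real.div_rpow (abs_nonneg x) (by norm_num : (0:ℝ) ≤ 2)]
          rw [div_le_iff₀ (Real.rpow_pos_of_pos (by norm_num : (0:ℝ) < 2) _)]
          have e8 : (2:ℝ) ^ (p - q) * 2 = 2 ^ (p - q + 1) := by
            rw [Real.rpow_add_one (by norm_num : (2:ℝ) ≠ 0) (p - q)]
          have h14 : (1:ℝ) ≤ 2 ^ (p - q + 1) := by
            have := Real.rpow_le_rpow_of_exponent_le (by norm_num : (1:ℝ) ≤ 2)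
              (by nlinarith : (0:ℝ) ≤ p - q + 1)
            rwa [Real.rpow_zero] at this
          nlinarith [Real.rpow_pos_of_pos hx' (p - q)]
        calc |y| ^ p = |y| ^ (p-q) * |y| ^ q := e5
        _ ≤ (|x|/2) ^ (p-q) * |y| ^ q := mul_le_mul_of_nonneg_right e6 (by positivity)
        _ ≤ (2 * |x| ^ (p-q)) * |y| ^ q := mul_le_mul_of_nonneg_right e7 (by positivity)
        _ = 2 * (|x| ^ (p-q) * |y| ^ q) := by ring
      calc |F (x + y + z) - F (x + y) - F (x + z) + F x|
          = ((p + 1) * |(|x + y + ξ| ^ p - |x + ξ| ^ p)|) * |z| := by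
            rw [hDD, abs_mul, show (p+1) * |x+y+ξ| ^ p - (p+1) * |x+ξ| ^ p = (p+1) * (|x+y+ξ| ^ p - |x+ξ| ^ p) by ring, abs_mul, abs_of_pos (by linarith : (0:ℝ) < p + 1)]
      _ ≤ ((p + 1) * (2 * (|x| ^ (p-q) * |y| ^ q))) * |z| := by
            apply mul_le_mul_of_nonneg_right _ (abs_nonneg z)
            exact mul_le_mul_of_nonneg_left (hcore.trans hyp) (by linarith)
      _ = (2 * (p + 1)) * (|x| ^ (p-q) * |y| ^ q) * |z| := by ring
      _ ≤ C * (|x| ^ (p-q) * |y| ^ q) * |z| := by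
            apply mul_le_mul_of_nonneg_right _ (abs_nonneg z)
            exact mul_le_mul_of_nonneg_right (by nlinarith : 2 * (p+1) ≤ C) (by positivity)
      _ = C * |x| ^ (p-q) * |y| ^ q * |z| := by ring
  · -- low dimensions : N ≤ 5
    intro hN5
    have hN5R : (N:ℝ) ≤ 5 := by exact_mod_cast hN5
    have hp1 : 1 ≤ p := by rw [hpdef, le_div_iff₀ hN2]; linarith
    have he : (6 - (N : ℝ)) / ((N : ℝ) - 2) = p - 1 := by
      rw [hpdef]; field_simp; ring
    rw [he]
    set M : ℝ := |x| + |y| + |z| with hMdef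
    have hM : 0 < M := by positivity
    obtain ⟨ξ, hξ, hD⟩ := key x z y
    have hDD : F (x + y + z) - F (x + y) - F (x + z) + F x
        = ((p + 1) * |x + y + ξ| ^ p - (p + 1) * |x + ξ| ^ p) * z := by
      rw [show x + y + z = x + z + y by ring]
      linarith [hD]
    have haM : |x + y + ξ| ≤ M := by
      calc |x + y + ξ| ≤ |x| + |y| + |ξ| := by
            calc |x + y + ξ| ≤ |x + y| + |ξ| := abs_add_le _ _
            _ ≤ |x| + |y| + |ξ| := by linarith [abs_add_le x y]
      _ ≤ M := by rw [hMdef]; linarith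
    have hbM : |x + ξ| ≤ M := by
      calc |x + ξ| ≤ |x| + |ξ| := abs_add_le _ _
      _ ≤ M := by rw [hMdef]; linarith [abs_nonneg y]
    have hcore : |(|x + y + ξ| ^ p - |x + ξ| ^ p)| ≤ p * M ^ (p - 1) * |y| := by
      have h6 := aux_lip_ge_one hp1 (abs_nonneg (x + y + ξ)) (abs_nonneg (x + ξ)) haM hbM
      have h7 : |(|x + y + ξ| - |x + ξ|)| ≤ |y| := by
        have := abs_abs_sub_abs_le_abs_sub (x + y + ξ) (x + ξ)
        rwa [show x + y + ξ - (x + ξ) = y by ring] at this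
      calc |(|x + y + ξ| ^ p - |x + ξ| ^ p)| ≤ p * M ^ (p-1) * |(|x + y + ξ| - |x + ξ|)| := h6
      _ ≤ p * M ^ (p-1) * |y| := by
          apply mul_le_mul_of_nonneg_left h7 (by positivity)
    calc |F (x + y + z) - F (x + y) - F (x + z) + F x|
        = ((p + 1) * |(|x + y + ξ| ^ p - |x + ξ| ^ p)|) * |z| := by
          rw [hDD, abs_mul, show (p+1) * |x+y+ξ| ^ p - (p+1) * |x+ξ| ^ p = (p+1) * (|x+y+ξ| ^ p - |x+ξ| ^ p) by ring, abs_mul, abs_of_pos (by linarith : (0:ℝ) < p + 1)]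
    _ ≤ ((p + 1) * (p * M ^ (p-1) * |y|)) * |z| := by
          apply mul_le_mul_of_nonneg_right _ (abs_nonneg z)
          exact mul_le_mul_of_nonneg_left hcore (by linarith)
    _ = (p * (p + 1)) * |y| * |z| * M ^ (p-1) := by ring
    _ ≤ C * |y| * |z| * M ^ (p-1) := by
          apply mul_le_mul_of_nonneg_right _ (by positivity)
          apply mul_le_mul_of_nonneg_right _ (abs_nonneg z)
          exact mul_le_mul_of_nonneg_right hCp (abs_nonneg y)
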